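/- Let L be a Lie-Rinehart algebra over A with anchor ρ, and (φ, α) : (A, L) → (A, L) an endomorphism in the category of Lie-Rinehart algebras. Then (A, L, [-,-]_α, φ, α, ρ_φ) with [x,y]_α := α([x,y]) and ρ_φ(x)(a) := φ(ρ(x)(a)) is a hom-Lie-Rinehart algebra over (A, φ). -/
import Mathlib


/-- The axioms of a hom-Lie-Rinehart algebra over `(A,φ)`, for a bracket `b`, twisting map
`α` and anchor `ρ` defined on (a sub-carrier `S` of) an `A`-module `L`. -/
structure IsHomLieRinehartOn (R : Type*) [CommRing R] (A : Type*) [CommRing A] [Algebra R A]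
    (L : Type*) [AddCommGroup L] [Module R L] [Module A L] [IsScalarTower R A L]
    (φ : A →ₐ[R] A) (b : L → L → L) (α : L → L) (ρ : L → A → A) (S : Set L) : Prop where
  add_mem : ∀ x ∈ S, ∀ y ∈ S, x + y ∈ S
  smul_mem : ∀ (a : A), ∀ x ∈ S, a • x ∈ S
  bracket_mem : ∀ x ∈ S, ∀ y ∈ S, b x y ∈ S
  alpha_mem : ∀ x ∈ S, α x ∈ S
  bracket_add_left : ∀ x ∈ S, ∀ y ∈ S, ∀ z ∈ S, b (x + y) z = b x z + b y z
  bracket_smul_left : ∀ (r : R), ∀ x ∈ S, ∀ y ∈ S, b (r • x) y = r • b x y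
  skew : ∀ x ∈ S, ∀ y ∈ S, b x y = -b y x
  alpha_add : ∀ x ∈ S, ∀ y ∈ S, α (x + y) = α x + α y
  alpha_smulR : ∀ (r : R), ∀ x ∈ S, α (r • x) = r • α x
  alpha_smulA : ∀ (a : A), ∀ x ∈ S, α (a • x) = φ a • α x
  alpha_bracket : ∀ x ∈ S, ∀ y ∈ S, α (b x y) = b (α x) (α y)
  hom_jacobi : ∀ x ∈ S, ∀ y ∈ S, ∀ z ∈ S,
    b (α x) (b y z) + b (α y) (b z x) + b (α z) (b x y) = 0
  rho_linearA : ∀ x ∈ S, IsLinearMap R (ρ x)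
  rho_add : ∀ x ∈ S, ∀ y ∈ S, ρ (x + y) = ρ x + ρ y
  rho_smulR : ∀ (r : R), ∀ x ∈ S, ∀ (a : A), ρ (r • x) a = r • ρ x a
  rho_smulA : ∀ (a : A), ∀ x ∈ S, ∀ (c : A), ρ (a • x) c = φ a * ρ x c
  rho_der : ∀ x ∈ S, ∀ (a c : A), ρ x (a * c) = φ a * ρ x c + φ c * ρ x a
  rep_beta : ∀ x ∈ S, ∀ (a : A), ρ (α x) (φ a) = φ (ρ x a)
  rep_bracket : ∀ x ∈ S, ∀ y ∈ S, ∀ (a : A),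
    ρ (b x y) (φ a) = ρ (α x) (ρ y a) - ρ (α y) (ρ x a)
  hom_leibniz : ∀ x ∈ S, ∀ y ∈ S, ∀ (a : A),
    b x (a • y) = φ a • b x y + ρ x a • α y

/-- a Lie-Rinehart algebra `L` over `A` (the case `φ = id`, `α = id` of the
hom-Lie-Rinehart axioms) together with an endomorphism `(φ, α)` in the category of
Lie-Rinehart algebras yields, by composition, the hom-Lie-Rinehart algebra
`(A, L, α∘[-,-], φ, α, φ∘ρ)` over `(A, φ)`. -/
theorem homLieRinehart_by_composition
    (R : Type*) [CommRing R] (A : Type*) [CommRing A] [Algebra R A]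
    (L : Type*) [AddCommGroup L] [Module R L] [Module A L] [IsScalarTower R A L]
    (b : L → L → L) (ρ : L → A → A)
    (hLR : IsHomLieRinehartOn R A L (AlgHom.id R A) b id ρ Set.univ)
    (φ : A →ₐ[R] A) (α : L → L)
    (hadd : ∀ x y : L, α (x + y) = α x + α y)
    (hsmulR : ∀ (r : R) (x : L), α (r • x) = r • α x)
    (hsmulA : ∀ (a : A) (x : L), α (a • x) = φ a • α x)
    (hbr : ∀ x y : L, α (b x y) = b (α x) (α y))
    (hanchor : ∀ (x : L) (a : A), ρ (α x) (φ a) = φ (ρ x a)) :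
    IsHomLieRinehartOn R A L φ (fun x y => α (b x y)) α (fun x a => φ (ρ x a))
      Set.univ := by
  have h0 : α 0 = 0 := by simpa using hsmulR 0 0
  have t : ∀ x : L, x ∈ (Set.univ : Set L) := fun _ => trivial
  refine
    { add_mem := fun _ _ _ _ => trivial
      smul_mem := fun _ _ _ => trivial
      bracket_mem := fun _ _ _ _ => trivial
      alpha_mem := fun _ _ => trivial
      bracket_add_left := fun x _ y _ z _ => by
        rw [hLR.bracket_add_left x (t x) y (t y) z (t z), hadd]
      bracket_smul_left := fun r x _ y _ => by
        rw [hLR.bracket_smul_left r x (t x) y (t y), hsmulR]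
      skew := fun x _ y _ => by
        rw [hLR.skew x (t x) y (t y), ← neg_one_smul R (b y x), hsmulR, neg_one_smul]
      alpha_add := fun x _ y _ => hadd x y
      alpha_smulR := fun r x _ => hsmulR r x
      alpha_smulA := fun a x _ => hsmulA a x
      alpha_bracket := fun x _ y _ => by rw [hbr, hbr]
      hom_jacobi := fun x _ y _ z _ => by
        simp only [hbr]
        have := hLR.hom_jacobi (α (α x)) (t _) (α (α y)) (t _) (α (α z)) (t _)
        simpa using this
      rho_linearA := fun x _ => by
        have h := hLR.rho_linearA x (t x)
        exact ⟨fun a c => by rw [h.map_add, map_add], fun r a => by rw [h.map_smul, map_smul]⟩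
      rho_add := fun x _ y _ => by
        funext a
        have := congrFun (hLR.rho_add x (t x) y (t y)) a
        simp only [Pi.add_apply] at this ⊢
        rw [this, map_add]
      rho_smulR := fun r x _ a => by
        rw [hLR.rho_smulR r x (t x) a, map_smul]
      rho_smulA := fun a x _ c => by
        have := hLR.rho_smulA a x (t x) c
        simp only [AlgHom.coe_id, id_eq] at this
        rw [this, map_mul]
      rho_der := fun x _ a c => by
        have := hLR.rho_der x (t x) a c
        simp only [AlgHom.coe_id, id_eq] at this
        rw [this, map_add, map_mul, map_mul]
      rep_beta := fun x _ a => by rw [hanchor]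
      rep_bracket := fun x _ y _ a => by
        have key : ρ (b x y) a = ρ x (ρ y a) - ρ y (ρ x a) := by
          simpa using hLR.rep_bracket x (t x) y (t y) a
        show φ (ρ (α (b x y)) (φ a)) = φ (ρ (α x) (φ (ρ y a))) - φ (ρ (α y) (φ (ρ x a)))
        rw [hanchor, hanchor, hanchor, key]; simp [map_sub]
      hom_leibniz := fun x _ y _ a => by
        have := hLR.hom_leibniz x (t x) y (t y) a
        simp only [AlgHom.coe_id, id_eq] at this
        rw [this, hadd, hsmulA, hsmulA] }
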